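/- Let m ≥ 3 and let Δ be a graph with vertex set {1, −1, 2, −2, …, m, −m} that is preserved by the group (C2^m)^+ ⋊ Sym(m) ≤ C2 ≀ Sym(m). Then Δ is isomorphic to K_{2m}, the edgeless graph on 2m vertices, mK_2, or the complement of mK_2. In particular, every such graph Δ has motion 2. -/

import Mathlib

open Equiv Pointwise

/-- A graph is vertex-transitive if its automorphism group is transitive on the
vertices. -/
def IsVertexTransitive {V : Type*} (Γ : SimpleGraph V) : Prop :=
  ∀ u v : V, ∃ e : Γ ≃g Γ, e u = v

/-- The motion of a graph: the least number of vertices moved by a non-identity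
automorphism (i.e. the minimal degree of its automorphism group). -/
noncomputable def motion {V : Type*} [Fintype V] [DecidableEq V] (Γ : SimpleGraph V) : ℕ :=
  sInf {n | ∃ e : Γ ≃g Γ, (e.toEquiv : Equiv.Perm V) ≠ 1 ∧
    (Equiv.Perm.support (e.toEquiv : Equiv.Perm V)).card = n}

/-- The element of the imprimitive wreath product determined by a function
`g : ι → Perm Δ` and a permutation `h` of the index set, acting on `Δ × ι` by
`(δ, i) ↦ (g i δ, h i)`. -/
def wreathPerm {Δ ι : Type*} (g : ι → Equiv.Perm Δ) (h : Equiv.Perm ι) :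
    Equiv.Perm (Δ × ι) where
  toFun x := (g x.2 x.1, h x.2)
  invFun x := ((g (h⁻¹ x.2))⁻¹ x.1, h⁻¹ x.2)
  left_inv := by rintro ⟨d, i⟩; simp
  right_inv := by rintro ⟨d, i⟩; simp

/-- The imprimitive wreath product `Y ≀ H` of permutation groups, as a permutation
group on `Δ × ι`.  (The defining set is already a subgroup, so taking the
subgroup closure does not change it.) -/
def wreathProduct {Δ ι : Type*} (Y : Subgroup (Equiv.Perm Δ))
    (H : Subgroup (Equiv.Perm ι)) : Subgroup (Equiv.Perm (Δ × ι)) :=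
  Subgroup.closure {σ | ∃ (g : ι → Equiv.Perm Δ) (h : Equiv.Perm ι),
    (∀ i, g i ∈ Y) ∧ h ∈ H ∧ σ = wreathPerm g h}

/-- The copy `X^ι` of a power of `X` inside the base group of a wreath product,
as a permutation group on `Δ × ι`. -/
def basePower {Δ ι : Type*} (X : Subgroup (Equiv.Perm Δ)) :
    Subgroup (Equiv.Perm (Δ × ι)) :=
  Subgroup.closure {σ | ∃ g : ι → Equiv.Perm Δ, (∀ i, g i ∈ X) ∧ σ = wreathPerm g 1}

/-- Transport of permutations along a bijection, as a group isomorphism. -/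
def permMapEquiv {α β : Type*} (f : α ≃ β) : Equiv.Perm α ≃* Equiv.Perm β where
  toFun g := (f.symm.trans g).trans f
  invFun g := (f.trans g).trans f.symm
  left_inv g := by ext x; simp
  right_inv g := by ext x; simp
  map_mul' g₁ g₂ := by ext x; simp [Equiv.Perm.mul_apply]

/-- Transport of a permutation group along a bijection of the underlying sets.
`mapPermGroup f G` is the permutation group on `β` corresponding to `G` under the
relabelling `f`; thus `G` and `mapPermGroup f G` are permutation isomorphic. -/
def mapPermGroup {α β : Type*} (f : α ≃ β) (G : Subgroup (Equiv.Perm α)) :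
    Subgroup (Equiv.Perm β) :=
  Subgroup.map (permMapEquiv f).toMonoidHom G

/-- The full wreath product `C₂ ≀ Sym(m)` acting on `Fin 2 × Fin m` (the set
`{1, -1, …, m, -m}`), where the `i`-th base coordinate swaps `(0,i)` and `(1,i)`
and `Sym(m)` permutes the pairs. -/
def fullC2Wreath (m : ℕ) : Subgroup (Equiv.Perm (Fin 2 × Fin m)) :=
  Subgroup.closure {σ | ∃ (g : Fin m → Equiv.Perm (Fin 2)) (h : Equiv.Perm (Fin m)),
    σ = wreathPerm g h}

/-- The subgroup `{1} × Sym(m)` of `C₂ ≀ Sym(m)`. -/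
def symPart (m : ℕ) : Subgroup (Equiv.Perm (Fin 2 × Fin m)) :=
  Subgroup.closure {σ | ∃ h : Equiv.Perm (Fin m), σ = wreathPerm (fun _ => 1) h}

/-- The superflip `τ`: the base-group element swapping `i` and `-i` for every `i`. -/
def superflip (m : ℕ) : Equiv.Perm (Fin 2 × Fin m) :=
  wreathPerm (fun _ => Equiv.swap 0 1) 1

/-- The subgroup `⟨τ⟩ × Sym(m)` of `C₂ ≀ Sym(m)`. -/
def flipSym (m : ℕ) : Subgroup (Equiv.Perm (Fin 2 × Fin m)) :=
  Subgroup.zpowers (superflip m) ⊔ symPart m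

/-- The augmentation subgroup `(C₂^m)⁺ × {1}` of the base group of `C₂ ≀ Sym(m)`:
tuples with an even number of non-trivial entries. -/
def evenBase (m : ℕ) : Subgroup (Equiv.Perm (Fin 2 × Fin m)) :=
  Subgroup.closure {σ | ∃ g : Fin m → Equiv.Perm (Fin 2),
    Even (Finset.univ.filter (fun i => g i ≠ 1)).card ∧ σ = wreathPerm g 1}

/-- The subgroup `(C₂^m)⁺ ⋊ Sym(m)` of `C₂ ≀ Sym(m)`. -/
def evenWreath (m : ℕ) : Subgroup (Equiv.Perm (Fin 2 × Fin m)) :=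
  evenBase m ⊔ symPart m

/-- The full automorphism group of a graph, as a subgroup of the symmetric group on
its vertex set. -/
def autGroup {V : Type*} (Γ : SimpleGraph V) : Subgroup (Equiv.Perm V) where
  carrier := {σ | ∀ u v : V, Γ.Adj (σ u) (σ v) ↔ Γ.Adj u v}
  one_mem' := by intro u v; rfl
  mul_mem' := by
    intro a b ha hb u v
    simp only [Set.mem_setOf_eq] at *
    rw [Equiv.Perm.mul_apply, Equiv.Perm.mul_apply, ha, hb]
  inv_mem' := by
    intro a ha u v
    simp only [Set.mem_setOf_eq] at *
    conv_rhs => rw [← (a.apply_symm_apply u : a (a⁻¹ u) = u), ← (a.apply_symm_apply v : a (a⁻¹ v) = v)]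
    rw [ha]
    rfl

/-- The 5-cycle `C₅`, as a graph on `ZMod 5`. -/
def C5 : SimpleGraph (ZMod 5) := SimpleGraph.fromRel (fun x y => x - y = 1)

/-- The perfect matching `m K₂` on the vertex set `Fin 2 × Fin m`. -/
def matching (m : ℕ) : SimpleGraph (Fin 2 × Fin m) :=
  SimpleGraph.fromRel (fun x y => x.2 = y.2 ∧ x.1 ≠ y.1)

/-- The Cartesian product `K_m □ K₂` on the vertex set `Fin 2 × Fin m`. -/
def prism (m : ℕ) : SimpleGraph (Fin 2 × Fin m) :=
  SimpleGraph.fromRel (fun x y => (x.2 = y.2 ∧ x.1 ≠ y.1) ∨ (x.1 = y.1 ∧ x.2 ≠ y.2))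

/-- The complete bipartite graph `K_{m,m}` on the vertex set `Fin 2 × Fin m`. -/
def completeBip (m : ℕ) : SimpleGraph (Fin 2 × Fin m) :=
  SimpleGraph.fromRel (fun x y => x.1 ≠ y.1)

section Statement16Aux

lemma wreathPerm_apply' {Δ ι : Type*} (g : ι → Equiv.Perm Δ) (h : Equiv.Perm ι) (a : Δ) (i : ι) :
    wreathPerm g h (a, i) = (g i a, h i) := rfl

lemma symOn_mem_evenWreath (m : ℕ) (h : Equiv.Perm (Fin m)) :
    wreathPerm (fun _ => 1) h ∈ evenWreath m :=
  (le_sup_right : symPart m ≤ evenWreath m) (Subgroup.subset_closure ⟨h, rfl⟩)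

lemma base_mem_evenWreath (m : ℕ) (g : Fin m → Equiv.Perm (Fin 2))
    (hg : Even (Finset.univ.filter (fun i => g i ≠ 1)).card) :
    wreathPerm g 1 ∈ evenWreath m :=
  (le_sup_left : evenBase m ≤ evenWreath m) (Subgroup.subset_closure ⟨g, hg, rfl⟩)

lemma swap01_ne_one : Equiv.swap (0 : Fin 2) 1 ≠ 1 := by
  intro h
  have h0 := congrArg (fun e : Equiv.Perm (Fin 2) => e 0) h
  simp at h0

lemma flip_mem_evenWreath (m : ℕ) (S : Finset (Fin m)) (hS : Even S.card) :
    wreathPerm (fun t => if t ∈ S then Equiv.swap 0 1 else 1) 1 ∈ evenWreath m := by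
  apply base_mem_evenWreath
  have h : (Finset.univ.filter fun i =>
      (if i ∈ S then Equiv.swap (0 : Fin 2) 1 else 1) ≠ 1) = S := by
    ext t
    by_cases ht : t ∈ S <;> simp [ht, swap01_ne_one]
  rw [h]; exact hS

end Statement16Aux

/-- Lemma `lem:graphs_easyTrans`.  A graph on
`{1, -1, …, m, -m}` (`m ≥ 3`) preserved by `(C₂^m)⁺ ⋊ Sym(m)` is isomorphic to
`K_{2m}`, the edgeless graph, `m K₂`, or the complement of `m K₂`; in particular
every such graph has motion 2. -/
theorem statement_16 (m : ℕ) (hm : 3 ≤ m) (Δ : SimpleGraph (Fin 2 × Fin m))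
    (hpres : evenWreath m ≤ autGroup Δ) :
    (Nonempty (Δ ≃g (⊤ : SimpleGraph (Fin 2 × Fin m))) ∨
     Nonempty (Δ ≃g (⊥ : SimpleGraph (Fin 2 × Fin m))) ∨
     Nonempty (Δ ≃g matching m) ∨ Nonempty (Δ ≃g (matching m)ᶜ)) ∧
    motion Δ = 2 := by
  classical
  set i0 : Fin m := ⟨0, by omega⟩ with hi0
  set i1 : Fin m := ⟨1, by omega⟩ with hi1
  have h01 : i0 ≠ i1 := by simp [hi0, hi1, Fin.ext_iff]
  have key : ∀ σ ∈ evenWreath m, ∀ u v, Δ.Adj (σ u) (σ v) ↔ Δ.Adj u v :=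
    fun σ hσ => hpres hσ
  have flipkey : ∀ (S : Finset (Fin m)), Even S.card → ∀ (a b : Fin 2) (i j : Fin m),
      Δ.Adj ((if i ∈ S then Equiv.swap 0 1 else 1) a, i)
        ((if j ∈ S then Equiv.swap 0 1 else 1) b, j) ↔ Δ.Adj (a, i) (b, j) := by
    intro S hS a b i j
    simpa [wreathPerm_apply'] using key _ (flip_mem_evenWreath m S hS) (a, i) (b, j)
  have symkey : ∀ (h : Equiv.Perm (Fin m)) (a b : Fin 2) (i j : Fin m),
      Δ.Adj (a, h i) (b, h j) ↔ Δ.Adj (a, i) (b, j) := by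
    intro h a b i j
    simpa [wreathPerm_apply'] using key _ (symOn_mem_evenWreath m h) (a, i) (b, j)
  set p := Δ.Adj (0, i0) (1, i0) with hpdef
  set q := Δ.Adj (0, i0) (0, i1) with hqdef
  -- transfer for matching-type pairs
  have hp' : ∀ i : Fin m, Δ.Adj (0, i) (1, i) ↔ p := by
    intro i
    have h := symkey (Equiv.swap i0 i) 0 1 i0 i0
    rwa [Equiv.swap_apply_left] at h
  have hp2 : ∀ (a b : Fin 2) (i : Fin m), a ≠ b → (Δ.Adj (a, i) (b, i) ↔ p) := by
    intro a b i hab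
    fin_cases a <;> fin_cases b
    · exact absurd rfl hab
    · exact hp' i
    · exact (Δ.adj_comm _ _).trans (hp' i)
    · exact absurd rfl hab
  -- transfer for cross pairs with 0 bits
  have hq' : ∀ i j : Fin m, i ≠ j → (Δ.Adj (0, i) (0, j) ↔ q) := by
    intro i j hij
    set s := Equiv.swap i0 i with hs
    set t := Equiv.swap i1 (s j) with ht
    have hsi0 : s i0 = i := Equiv.swap_apply_left _ _
    have hi0sj : i0 ≠ s j := by
      intro h
      apply hij
      have h2 : s i0 = s (s j) := by rw [← h]
      rwa [hsi0, Equiv.swap_apply_self] at h2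
    have key2 := symkey (s * t) 0 0 i0 i1
    have h1 : (s * t) i0 = i := by
      rw [Equiv.Perm.mul_apply, ht, Equiv.swap_apply_of_ne_of_ne h01 hi0sj, hsi0]
    have h2 : (s * t) i1 = j := by
      rw [Equiv.Perm.mul_apply, ht, Equiv.swap_apply_left, Equiv.swap_apply_self]
    rwa [h1, h2] at key2
  have hcard2 : ∀ x y : Fin m, x ≠ y → Even ({x, y} : Finset (Fin m)).card := by
    intro x y hxy
    rw [Finset.card_insert_of_notMem (by simp [hxy]), Finset.card_singleton]
    exact even_two
  -- transfer for all cross pairs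
  have hq2 : ∀ (a b : Fin 2) (i j : Fin m), i ≠ j → (Δ.Adj (a, i) (b, j) ↔ q) := by
    intro a b i j hij
    obtain ⟨k, hki, hkj⟩ : ∃ k : Fin m, k ≠ i ∧ k ≠ j := by
      by_contra hc
      push_neg at hc
      have hsub : (Finset.univ : Finset (Fin m)) ⊆ {i, j} := by
        intro t _
        simp only [Finset.mem_insert, Finset.mem_singleton]
        by_cases h : t = i
        · exact Or.inl h
        · exact Or.inr (hc t h)
      have h2 : ({i, j} : Finset (Fin m)).card ≤ 2 := by
        refine le_trans (Finset.card_insert_le _ _) ?_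
        simp
      have h3 := Finset.card_le_card hsub
      rw [Finset.card_univ, Fintype.card_fin] at h3
      omega
    fin_cases a <;> fin_cases b
    · exact hq' i j hij
    · -- (0, 1) : flip at j and k
      have h := flipkey {j, k} (hcard2 j k (Ne.symm hkj)) 0 0 i j
      rw [if_neg (by simp [hij, Ne.symm hki]), if_pos (by simp)] at h
      simp only [Equiv.swap_apply_left, Equiv.Perm.one_apply] at h
      exact h.trans (hq' i j hij)
    · -- (1, 0) : flip at i and k
      have h := flipkey {i, k} (hcard2 i k (Ne.symm hki)) 0 0 i j
      rw [if_pos (by simp), if_neg (by simp [Ne.symm hij, Ne.symm hkj])] at h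
      simp only [Equiv.swap_apply_left, Equiv.Perm.one_apply] at h
      exact h.trans (hq' i j hij)
    · -- (1, 1) : flip at i and j
      have h := flipkey {i, j} (hcard2 i j hij) 0 0 i j
      rw [if_pos (by simp), if_pos (by simp)] at h
      simp only [Equiv.swap_apply_left, Equiv.Perm.one_apply] at h
      exact h.trans (hq' i j hij)
  -- the master adjacency characterisation
  have hadj : ∀ x y : Fin 2 × Fin m,
      Δ.Adj x y ↔ ((x.2 = y.2 ∧ x.1 ≠ y.1) ∧ p) ∨ (x.2 ≠ y.2 ∧ q) := by
    rintro ⟨a, i⟩ ⟨b, j⟩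
    by_cases hij : i = j
    · subst hij
      by_cases hab : a = b
      · subst hab; simp
      · rw [hp2 a b i hab]; simp [hab]
    · rw [hq2 a b i j hij]; simp [hij]
  -- the swap automorphism giving motion 2
  set gswap : Fin m → Equiv.Perm (Fin 2) :=
    (fun t => if t = i0 then Equiv.swap 0 1 else 1) with hgswap
  set f : Equiv.Perm (Fin 2 × Fin m) := wreathPerm gswap 1 with hf
  have haut : ∀ u v, Δ.Adj (f u) (f v) ↔ Δ.Adj u v := by
    rintro ⟨a, i⟩ ⟨b, j⟩
    rw [hf, wreathPerm_apply', wreathPerm_apply', hadj, hadj]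
    simp only [Equiv.Perm.one_apply]
    by_cases hij : i = j
    · subst hij
      rw [(gswap i).injective.ne_iff]
    · simp [hij]
  let e : Δ ≃g Δ := { toEquiv := f, map_rel_iff' := @fun u v => haut u v }
  have he : (e.toEquiv : Equiv.Perm (Fin 2 × Fin m)) = f := rfl
  have hfswap : f = Equiv.swap ((0 : Fin 2), i0) ((1 : Fin 2), i0) := by
    apply Equiv.ext
    rintro ⟨a, i⟩
    by_cases hi : i = i0
    · subst hi
      fin_cases a
      · show f (0, i0) = Equiv.swap ((0 : Fin 2), i0) ((1 : Fin 2), i0) (0, i0)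
        rw [Equiv.swap_apply_left]
        simp [hf, wreathPerm_apply', hgswap]
      · show f (1, i0) = Equiv.swap ((0 : Fin 2), i0) ((1 : Fin 2), i0) (1, i0)
        rw [Equiv.swap_apply_right]
        simp [hf, wreathPerm_apply', hgswap]
    · rw [Equiv.swap_apply_of_ne_of_ne (by simp [hi]) (by simp [hi])]
      simp [hf, wreathPerm_apply', hgswap, hi]
  have hne01 : ((0 : Fin 2), i0) ≠ ((1 : Fin 2), i0) := by simp
  have hfne : f ≠ 1 := by
    rw [hfswap]
    exact fun h => hne01 (Equiv.swap_eq_one_iff.mp h)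
  have hfcard : (Equiv.Perm.support f).card = 2 := by
    rw [hfswap]; exact Equiv.Perm.card_support_swap hne01
  have hmem : (2 : ℕ) ∈ {n | ∃ e : Δ ≃g Δ, (e.toEquiv : Equiv.Perm (Fin 2 × Fin m)) ≠ 1 ∧
      (Equiv.Perm.support (e.toEquiv : Equiv.Perm (Fin 2 × Fin m))).card = n} :=
    ⟨e, by rw [he]; exact hfne, by rw [he]; exact hfcard⟩
  have hmot : motion Δ = 2 := by
    unfold motion
    refine le_antisymm (Nat.sInf_le hmem) (le_csInf ⟨2, hmem⟩ ?_)
    rintro n ⟨e', hne', hcard'⟩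
    rw [← hcard']
    exact Equiv.Perm.one_lt_card_support_of_ne_one hne'
  refine ⟨?_, hmot⟩
  by_cases hp : p <;> by_cases hq : q
  · -- complete graph
    refine Or.inl ⟨?_⟩
    have hD : Δ = (⊤ : SimpleGraph (Fin 2 × Fin m)) := by
      ext ⟨a, i⟩ ⟨b, j⟩
      rw [hadj]
      simp [hp, hq, Prod.ext_iff]
      try tauto
    rw [hD]
  · -- matching
    refine Or.inr (Or.inr (Or.inl ⟨?_⟩))
    have hD : Δ = matching m := by
      ext ⟨a, i⟩ ⟨b, j⟩
      rw [hadj]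
      simp [hp, hq, matching, Prod.ext_iff, eq_comm, ne_comm]
      try tauto
    rw [hD]
  · -- complement of matching
    refine Or.inr (Or.inr (Or.inr ⟨?_⟩))
    have hD : Δ = (matching m)ᶜ := by
      ext ⟨a, i⟩ ⟨b, j⟩
      rw [hadj]
      simp [hp, hq, matching, SimpleGraph.compl_adj, Prod.ext_iff, eq_comm, ne_comm]
      try tauto
    rw [hD]
  · -- empty graph
    refine Or.inr (Or.inl ⟨?_⟩)
    have hD : Δ = (⊥ : SimpleGraph (Fin 2 × Fin m)) := by
      ext ⟨a, i⟩ ⟨b, j⟩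
      rw [hadj]
      simp [hp, hq]
    rw [hD]
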